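/- Let κ > 0 and define φ : ℝ → ℝ by φ(x) = 1/2 − (1/π) arctan(e^{κx}). Then: (i) there exists λ₀ > 0 such that for all x ∈ ℝ, λ₀ e^{−κ|x|} < −φ′(x) < (1/λ₀) e^{−κ|x|}; (ii) for all x ∈ ℝ, |φ‴(x)| ≤ −κ² φ′(x); (iii) there exists λ₁ > 0 such that for all x ≥ 0, λ₁ e^{−κx} ≤ φ(x). -/

import Mathlib

open Real

lemma hu (κ x : ℝ) : HasDerivAt (fun x => Real.exp (κ * x)) (κ * Real.exp (κ * x)) x := by
  exact ((hasDerivAt_id x).const_mul κ).exp.congr_deriv (by simp only [id, mul_one]; ring)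

lemma hd1 (κ x : ℝ) :
    HasDerivAt (fun x => 1 / 2 - (1 / Real.pi) * Real.arctan (Real.exp (κ * x)))
      (-(κ / Real.pi) * (Real.exp (κ * x) / (1 + Real.exp (κ * x) ^ 2))) x := by
  have h := (((Real.hasDerivAt_arctan (Real.exp (κ * x))).comp x (hu κ x)).const_mul
    (1 / Real.pi)).const_sub (1 / 2)
  refine h.congr_deriv ?_
  ring

lemma hd2 (κ x : ℝ) :
    HasDerivAt (fun x => -(κ / Real.pi) * (Real.exp (κ * x) / (1 + Real.exp (κ * x) ^ 2)))
      (-(κ ^ 2 / Real.pi) *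
        ((Real.exp (κ * x) - Real.exp (κ * x) ^ 3) / (1 + Real.exp (κ * x) ^ 2) ^ 2)) x := by
  have hne : (1 + Real.exp (κ * x) ^ 2) ≠ 0 := by positivity
  have hden : HasDerivAt (fun x => 1 + Real.exp (κ * x) ^ 2)
      (2 * Real.exp (κ * x) * (κ * Real.exp (κ * x))) x := by
    simpa using (((hu κ x).pow 2).const_add 1)
  have h := (((hu κ x).div hden hne).const_mul (-(κ / Real.pi)))
  refine h.congr_deriv ?_
  ring

lemma hd3 (κ x : ℝ) :
    HasDerivAt (fun x => -(κ ^ 2 / Real.pi) *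
        ((Real.exp (κ * x) - Real.exp (κ * x) ^ 3) / (1 + Real.exp (κ * x) ^ 2) ^ 2))
      (-(κ ^ 3 / Real.pi) *
        (Real.exp (κ * x) * (1 - 6 * Real.exp (κ * x) ^ 2 + Real.exp (κ * x) ^ 4) /
          (1 + Real.exp (κ * x) ^ 2) ^ 3)) x := by
  have hne : ((1 + Real.exp (κ * x) ^ 2) ^ 2) ≠ 0 := by positivity
  have hnum : HasDerivAt (fun x => Real.exp (κ * x) - Real.exp (κ * x) ^ 3)
      (κ * Real.exp (κ * x) - 3 * Real.exp (κ * x) ^ 2 * (κ * Real.exp (κ * x))) x :=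
    (hu κ x).sub ((hu κ x).pow 3)
  have hden0 : HasDerivAt (fun x => 1 + Real.exp (κ * x) ^ 2)
      (2 * Real.exp (κ * x) * (κ * Real.exp (κ * x))) x := by
    simpa using (((hu κ x).pow 2).const_add 1)
  have hden : HasDerivAt (fun x => (1 + Real.exp (κ * x) ^ 2) ^ 2)
      (2 * (1 + Real.exp (κ * x) ^ 2) * (2 * Real.exp (κ * x) * (κ * Real.exp (κ * x)))) x := by
    exact (hden0.pow 2).congr_deriv (by norm_num)
  have h := ((hnum.div hden hne).const_mul (-(κ ^ 2 / Real.pi)))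
  refine h.congr_deriv ?_
  field_simp
  ring

lemma arctan_ge_half (y : ℝ) (h0 : 0 ≤ y) (h1 : y ≤ 1) : y / 2 ≤ Real.arctan y := by
  rcases eq_or_lt_of_le h0 with h | h
  · simp [← h]
  · have hmono : StrictMonoOn (fun t => Real.arctan t - t / 2) (Set.Icc 0 1) := by
      apply strictMonoOn_of_deriv_pos (convex_Icc 0 1)
      · exact (Real.continuous_arctan.sub (continuous_id.div_const 2)).continuousOn
      · intro t ht
        rw [interior_Icc] at ht
        have hg : HasDerivAt (fun t : ℝ => Real.arctan t - t / 2)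
            (1 / (1 + t ^ 2) - 1 / 2) t :=
          (Real.hasDerivAt_arctan t).sub ((hasDerivAt_id t).div_const 2)
        rw [hg.deriv]
        have h1t : (0:ℝ) < 1 + t ^ 2 := by positivity
        rw [sub_pos, div_lt_div_iff₀ (by norm_num) h1t]
        nlinarith [ht.1, ht.2]
    have h2 := hmono (Set.mem_Icc.mpr ⟨le_refl 0, zero_le_one⟩)
      (Set.mem_Icc.mpr ⟨h0, h1⟩) h
    simp only [Real.arctan_zero] at h2
    linarith

theorem cutoff_properties
    (κ : ℝ) (hκ : 0 < κ) (φ : ℝ → ℝ)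
    (hφ : ∀ x : ℝ, φ x = 1 / 2 - (1 / Real.pi) * Real.arctan (Real.exp (κ * x))) :
    (∃ lam₀ > 0, ∀ x : ℝ,
        lam₀ * Real.exp (-κ * |x|) < -deriv φ x ∧
        -deriv φ x < (1 / lam₀) * Real.exp (-κ * |x|)) ∧
    (∀ x : ℝ, |iteratedDeriv 3 φ x| ≤ -(κ ^ 2) * deriv φ x) ∧
    (∃ lam₁ > 0, ∀ x ≥ (0:ℝ), lam₁ * Real.exp (-κ * x) ≤ φ x) := by
  have hπ := Real.pi_pos
  have hφf : φ = fun x => 1 / 2 - (1 / Real.pi) * Real.arctan (Real.exp (κ * x)) :=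
    funext hφ
  have hderiv : deriv φ = fun x =>
      -(κ / Real.pi) * (Real.exp (κ * x) / (1 + Real.exp (κ * x) ^ 2)) := by
    rw [hφf]; exact funext fun x => (hd1 κ x).deriv
  refine ⟨?_, ?_, ?_⟩
  · -- part (i)
    refine ⟨min (κ / (4 * Real.pi)) (Real.pi / κ), lt_min (by positivity) (by positivity), ?_⟩
    intro x
    set m := min (κ / (4 * Real.pi)) (Real.pi / κ) with hm
    have hm0 : 0 < m := lt_min (by positivity) (by positivity)
    have hm1 : m ≤ κ / (4 * Real.pi) := min_le_left _ _
    have hm2 : m ≤ Real.pi / κ := min_le_right _ _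
    simp only [hderiv]
    set E := Real.exp (κ * |x|) with hE
    set F := Real.exp (-κ * |x|) with hF
    have hE0 : (0:ℝ) < E := Real.exp_pos _
    have hF0 : (0:ℝ) < F := Real.exp_pos _
    have hEF : E * F = 1 := by
      rw [hE, hF, ← Real.exp_add]; ring_nf; exact Real.exp_zero
    have hF1 : F ≤ 1 := by
      rw [hF]; apply Real.exp_le_one_iff.mpr; nlinarith [abs_nonneg x]
    have hval : -(-(κ / Real.pi) * (Real.exp (κ * x) / (1 + Real.exp (κ * x) ^ 2)))
        = (κ / Real.pi) / (E + F) := by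
      have hx : Real.exp (κ * x) + Real.exp (-(κ * x)) = E + F := by
        rcases abs_cases x with ⟨h, _⟩ | ⟨h, _⟩ <;>
          simp [hE, hF, h, mul_neg, neg_neg, add_comm]
      have hu0 : (0:ℝ) < Real.exp (κ * x) := Real.exp_pos _
      have hEFx : E + F = Real.exp (κ * x) + (Real.exp (κ * x))⁻¹ := by
        rw [← hx, Real.exp_neg]
      have hfr : Real.exp (κ * x) + (Real.exp (κ * x))⁻¹
          = (1 + Real.exp (κ * x) ^ 2) / Real.exp (κ * x) := by
        field_simp; ring
      rw [hEFx, hfr, div_div_eq_mul_div]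
      ring
    rw [hval]
    constructor
    · rw [lt_div_iff₀ (by positivity)]
      have key : m * F * (E + F) = m * (F * E) + m * F ^ 2 := by ring
      have h4 : m * (4 * Real.pi) ≤ κ := (le_div_iff₀ (by positivity)).mp hm1
      have h5 : 4 * m ≤ κ / Real.pi := by
        rw [le_div_iff₀ hπ]; nlinarith
      have hF2 : F ^ 2 ≤ 1 := by nlinarith
      have hFF : m * F ^ 2 ≤ m := by
        nlinarith [mul_le_mul_of_nonneg_left hF2 hm0.le]
      have hMFE : m * (F * E) = m := by rw [mul_comm F E, hEF, mul_one]
      linarith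
    · rw [div_lt_iff₀ (by positivity)]
      have h1m : κ / Real.pi ≤ 1 / m := by
        rw [div_le_div_iff₀ hπ hm0]
        have h := mul_le_mul_of_nonneg_left hm2 hκ.le
        have h' : κ * (Real.pi / κ) = Real.pi := by field_simp
        nlinarith
      have hkey : 1 / m * F * (E + F) = 1 / m * (F * E) + 1 / m * F ^ 2 := by ring
      have hMFE : 1 / m * (F * E) = 1 / m := by rw [mul_comm F E, hEF, mul_one]
      have hpos : 0 < 1 / m * F ^ 2 := by positivity
      linarith
  · -- part (ii)
    intro x
    have hderiv2 : deriv (deriv φ) = fun x => -(κ ^ 2 / Real.pi) *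
        ((Real.exp (κ * x) - Real.exp (κ * x) ^ 3) / (1 + Real.exp (κ * x) ^ 2) ^ 2) := by
      rw [hderiv]; exact funext fun x => (hd2 κ x).deriv
    have h3 : iteratedDeriv 3 φ x = -(κ ^ 3 / Real.pi) *
        (Real.exp (κ * x) * (1 - 6 * Real.exp (κ * x) ^ 2 + Real.exp (κ * x) ^ 4) /
          (1 + Real.exp (κ * x) ^ 2) ^ 3) := by
      rw [show (3:ℕ) = 2 + 1 from rfl, iteratedDeriv_succ,
        show (2:ℕ) = 1 + 1 from rfl, iteratedDeriv_succ, iteratedDeriv_one, hderiv2]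
      exact (hd3 κ x).deriv
    rw [h3]
    simp only [hderiv]
    set u := Real.exp (κ * x) with hu'
    have hu0 : (0:ℝ) < u := Real.exp_pos _
    have hQ0 : (0:ℝ) < 1 + u ^ 2 := by positivity
    have habs : |1 - 6 * u ^ 2 + u ^ 4| ≤ (1 + u ^ 2) ^ 2 :=
      abs_le.mpr ⟨by nlinarith [sq_nonneg (u ^ 2 - 1)], by nlinarith [sq_nonneg u]⟩
    have hL : |-(κ ^ 3 / Real.pi) * (u * (1 - 6 * u ^ 2 + u ^ 4) / (1 + u ^ 2) ^ 3)|
        = (κ ^ 3 / Real.pi) * (u * |1 - 6 * u ^ 2 + u ^ 4| / (1 + u ^ 2) ^ 3) := by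
      rw [abs_mul, abs_neg, abs_of_pos (by positivity), abs_div, abs_mul,
        abs_of_pos hu0, abs_of_pos (by positivity : (0:ℝ) < (1 + u ^ 2) ^ 3)]
    rw [hL]
    have hR : -(κ ^ 2) * (-(κ / Real.pi) * (u / (1 + u ^ 2)))
        = (κ ^ 3 / Real.pi) * (u / (1 + u ^ 2)) := by ring
    rw [hR]
    apply mul_le_mul_of_nonneg_left _ (by positivity)
    rw [div_le_div_iff₀ (by positivity) hQ0]
    nlinarith [mul_le_mul_of_nonneg_left habs (mul_nonneg hu0.le hQ0.le)]
  · -- part (iii)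
    refine ⟨1 / (2 * Real.pi), by positivity, ?_⟩
    intro x hx
    rw [hφ x]
    have hy0 : (0:ℝ) < Real.exp (-(κ * x)) := Real.exp_pos _
    have hy1 : Real.exp (-(κ * x)) ≤ 1 := Real.exp_le_one_iff.mpr (by nlinarith)
    have harc : Real.arctan (Real.exp (κ * x))
        = Real.pi / 2 - Real.arctan (Real.exp (-(κ * x))) := by
      have h := Real.arctan_inv_of_pos (Real.exp_pos (κ * x))
      rw [← Real.exp_neg] at h
      linarith
    have key := arctan_ge_half (Real.exp (-(κ * x))) hy0.le hy1
    rw [harc, show -κ * x = -(κ * x) by ring]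
    have h2 : 1 / 2 - 1 / Real.pi * (Real.pi / 2 - Real.arctan (Real.exp (-(κ * x))))
        = (1 / Real.pi) * Real.arctan (Real.exp (-(κ * x))) := by
      field_simp
      ring
    rw [h2]
    calc 1 / (2 * Real.pi) * Real.exp (-(κ * x))
        = (1 / Real.pi) * (Real.exp (-(κ * x)) / 2) := by ring
      _ ≤ (1 / Real.pi) * Real.arctan (Real.exp (-(κ * x))) :=
          mul_le_mul_of_nonneg_left key (by positivity)
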